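/- Let a, ω ∈ ℂ, n ∈ ℕ, and z ∈ ℂ with ‖z‖ < 1. Then the n-th moment of the Christoffel-transformed Meixner weight satisfies ∑_{x=0}^∞ (x − ω)·φ_n(x)·(a)_x·z^x/x! = z^n·(a)_n·(1 − z)^{−a−n−1}·(a·z + ω·z + n − ω), where (1 − z)^{−a−n−1} denotes the principal branch of the complex power. -/

import Mathlib

open Finset

/-- The Pochhammer symbol `(c)_n = ∏_{j=0}^{n-1} (c + j)`. -/
noncomputable def poch (c : ℂ) (n : ℕ) : ℂ := ∏ j ∈ Finset.range n, (c + (j : ℂ))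

/-- The falling factorial `φ_n(x) = ∏_{j=0}^{n-1} (x - j)`. -/
noncomputable def fallFac (n : ℕ) (x : ℂ) : ℂ := ∏ j ∈ Finset.range n, (x - (j : ℂ))

lemma poch_succ (c : ℂ) (n : ℕ) : poch c (n + 1) = poch c n * (c + n) := by
  simp [poch, Finset.prod_range_succ]

lemma poch_add (c : ℂ) (m k : ℕ) : poch c (m + k) = poch c m * poch (c + m) k := by
  simp only [poch, Finset.prod_range_add]
  congr 1
  refine Finset.prod_congr rfl fun j _ => ?_
  push_cast
  ring

lemma fallFac_succ (n : ℕ) (x : ℂ) : fallFac (n + 1) x = fallFac n x * (x - n) := by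
  simp [fallFac, Finset.prod_range_succ]

lemma fallFac_nat_zero (n : ℕ) (x : ℕ) (hx : x < n) : fallFac n (x : ℂ) = 0 := by
  refine Finset.prod_eq_zero (Finset.mem_range.mpr hx) ?_
  simp

lemma fallFac_add_mul_factorial (n k : ℕ) :
    fallFac n ((k + n : ℕ) : ℂ) * (k.factorial : ℂ) = ((k + n).factorial : ℂ) := by
  induction n generalizing k with
  | zero => simp [fallFac]
  | succ n ih =>
    have h1 : fallFac (n + 1) ((k + (n + 1) : ℕ) : ℂ)
        = fallFac n (((k + 1) + n : ℕ) : ℂ) * (k + 1 : ℂ) := by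
      rw [fallFac_succ]
      congr 2
      · congr 1; push_cast; ring
      · push_cast; ring
    calc fallFac (n + 1) ((k + (n + 1) : ℕ) : ℂ) * (k.factorial : ℂ)
        = fallFac n (((k + 1) + n : ℕ) : ℂ) * ((k + 1 : ℂ) * k.factorial) := by
          rw [h1]; ring
      _ = fallFac n (((k + 1) + n : ℕ) : ℂ) * ((k + 1).factorial : ℂ) := by
          congr 1; push_cast [Nat.factorial_succ]; ring
      _ = (((k + 1) + n).factorial : ℂ) := ih (k + 1)
      _ = ((k + (n + 1)).factorial : ℂ) := by congr 2; omega

lemma slit_of_ball {w : ℂ} (hw : w ∈ Metric.ball (0 : ℂ) 1) :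
    (1 - w) ∈ Complex.slitPlane := by
  rw [Metric.mem_ball, dist_zero_right] at hw
  apply Complex.mem_slitPlane_iff.mpr
  left
  simp only [Complex.sub_re, Complex.one_re]
  have h1 : |w.re| ≤ ‖w‖ := Complex.abs_re_le_norm w
  have h2 : |w.re| < 1 := lt_of_le_of_lt h1 hw
  linarith [(abs_lt.mp h2).2]

/-- The generalized binomial series: `∑ (c)_k z^k / k! = (1-z)^(-c)`. -/
lemma hasSum_poch (c : ℂ) {z : ℂ} (hz : ‖z‖ < 1) :
    HasSum (fun k : ℕ => poch c k * z ^ k / (k.factorial : ℂ)) ((1 - z) ^ (-c)) := by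
  have hderiv : ∀ (d : ℂ) (w : ℂ), w ∈ Metric.ball (0 : ℂ) 1 →
      HasDerivAt (fun u : ℂ => (1 - u) ^ (-(c + d))) ((c + d) * (1 - w) ^ (-(c + (d + 1)))) w := by
    intro d w hw
    have h1 : HasDerivAt (fun u : ℂ => 1 - u) (-1) w := by
      simpa using (hasDerivAt_id w).const_sub 1
    have h2 := h1.cpow_const (c := -(c + d)) (slit_of_ball hw)
    convert h2 using 1
    have h3 : -(c + d) - 1 = -(c + (d + 1)) := by ring
    rw [h3]; ring
  have hdiff : DifferentiableOn ℂ (fun u : ℂ => (1 - u) ^ (-c)) (Metric.ball (0 : ℂ) 1) := by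
    intro w hw
    have h := hderiv 0 w hw
    simp only [add_zero] at h
    exact h.differentiableAt.differentiableWithinAt
  have hiter : ∀ (k : ℕ) (w : ℂ), w ∈ Metric.ball (0 : ℂ) 1 →
      iteratedDeriv k (fun u : ℂ => (1 - u) ^ (-c)) w = poch c k * (1 - w) ^ (-(c + k)) := by
    intro k
    induction k with
    | zero => intro w _; simp [poch]
    | succ k ih =>
      intro w hw
      rw [iteratedDeriv_succ]
      have hev : (iteratedDeriv k (fun u : ℂ => (1 - u) ^ (-c)))
          =ᶠ[nhds w] (fun u => poch c k * (1 - u) ^ (-(c + k))) := by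
        filter_upwards [Metric.isOpen_ball.mem_nhds hw] with u hu using ih u hu
      rw [hev.deriv_eq]
      rw [((hderiv k w hw).const_mul (poch c k)).deriv]
      rw [poch_succ]
      push_cast
      ring_nf
  have hzball : z ∈ Metric.ball (0 : ℂ) 1 := by
    rwa [Metric.mem_ball, dist_zero_right]
  have h0 : (0 : ℂ) ∈ Metric.ball (0 : ℂ) 1 := by simp
  have H := Complex.hasSum_taylorSeries_on_ball hdiff hzball
  convert H using 2 with k
  case e'_3 => rfl
  rw [hiter k 0 h0]
  simp only [sub_zero, smul_eq_mul, Nat.cast_zero]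
  rw [Complex.one_cpow]
  field_simp

/-- Moment of the Meixner weight with falling factorial. -/
lemma hasSum_fallFac_poch (a : ℂ) (n : ℕ) {z : ℂ} (hz : ‖z‖ < 1) :
    HasSum (fun x : ℕ => fallFac n (x : ℂ) * poch a x * z ^ x / (x.factorial : ℂ))
      (z ^ n * poch a n * (1 - z) ^ (-(a + n))) := by
  have key : HasSum (fun k : ℕ =>
      fallFac n ((k + n : ℕ) : ℂ) * poch a (k + n) * z ^ (k + n) / (((k + n).factorial : ℂ)))
      (z ^ n * poch a n * (1 - z) ^ (-(a + n))) := by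
    have h1 := (hasSum_poch (a + n) hz).mul_left (z ^ n * poch a n)
    refine h1.congr_fun fun k => ?_
    have hfac : (k.factorial : ℂ) ≠ 0 := Nat.cast_ne_zero.mpr k.factorial_ne_zero
    have hfac2 : (((k + n).factorial : ℕ) : ℂ) ≠ 0 :=
      Nat.cast_ne_zero.mpr (k + n).factorial_ne_zero
    rw [show poch a (k + n) = poch a n * poch (a + (n:ℕ)) k by rw [Nat.add_comm k n, poch_add]]
    have hff := fallFac_add_mul_factorial n k
    push_cast at hff ⊢
    field_simp
    linear_combination (poch a n * poch (a + (n:ℂ)) k * (z ^ k * z ^ n)) * hff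
  have hvanish : ∀ i ∈ Finset.range n,
      fallFac n (i : ℂ) * poch a i * z ^ i / (i.factorial : ℂ) = 0 := by
    intro i hi
    rw [fallFac_nat_zero n i (Finset.mem_range.mp hi)]
    simp
  refine (hasSum_nat_add_iff' (f := fun x : ℕ =>
    fallFac n (x : ℂ) * poch a x * z ^ x / (x.factorial : ℂ)) n).mp ?_
  rw [Finset.sum_eq_zero hvanish, sub_zero]
  exact key

/-- the `n`-th moment of the Christoffel-transformed Meixner weight:
`∑_{x≥0} (x-ω) φ_n(x) (a)_x z^x/x! = z^n (a)_n (1-z)^{-a-n-1} (az + ωz + n - ω)`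
(principal branch). -/
theorem christoffel_meixner_moment (a ω : ℂ) (n : ℕ) (z : ℂ) (hz : ‖z‖ < 1) :
    (∑' x : ℕ, ((x : ℂ) - ω) * fallFac n (x : ℂ) * poch a x * z ^ x / (x.factorial : ℂ))
      = z ^ n * poch a n * (1 - z) ^ (-a - (n : ℂ) - 1) * (a * z + ω * z + (n : ℂ) - ω) := by
  have h1z : (1 : ℂ) - z ≠ 0 := by
    intro h
    have hz1 : z = 1 := by linear_combination -h
    rw [hz1] at hz
    simp at hz
  have hsum : HasSum (fun x : ℕ =>
      ((x : ℂ) - ω) * fallFac n (x : ℂ) * poch a x * z ^ x / (x.factorial : ℂ))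
      (z ^ (n + 1) * poch a (n + 1) * (1 - z) ^ (-(a + (n + 1 : ℕ)))
        + ((n : ℂ) - ω) * (z ^ n * poch a n * (1 - z) ^ (-(a + n)))) := by
    have hA := hasSum_fallFac_poch a (n + 1) hz
    have hB := (hasSum_fallFac_poch a n hz).mul_left ((n : ℂ) - ω)
    refine (hA.add hB).congr_fun fun x => ?_
    have hxsplit : ((x : ℂ) - ω) * fallFac n (x : ℂ)
        = fallFac (n + 1) (x : ℂ) + ((n : ℂ) - ω) * fallFac n (x : ℂ) := by
      rw [fallFac_succ]; ring
    rw [hxsplit]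
    ring
  rw [hsum.tsum_eq]
  have hexp : (-(a + ((n : ℕ) + 1 : ℕ) : ℂ)) = -a - (n : ℂ) - 1 := by push_cast; ring
  have hexp2 : (-(a + (n : ℂ))) = (-a - (n : ℂ) - 1) + 1 := by ring
  rw [hexp, hexp2, Complex.cpow_add _ _ h1z, Complex.cpow_one, poch_succ]
  ring
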